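/- Let A and B be commutative rings, let M be an abelian group equipped with an A-module structure and a B-module structure whose scalar actions commute, and let N be a B-module that is finitely generated and projective as a B-module. Equip Hom_A(M, A) with the B-module structure (b·φ)(m) = φ(b·m). Then the canonical A-linear map Hom_A(M, A) ⊗_B Hom_B(N, B) → Hom_A(M ⊗_B N, A), sending φ ⊗ ψ to the functional m ⊗ n ↦ φ(ψ(n)·m), is bijective. -/

import Mathlib

/-! The `B`-module structure on `Hom_A(X, A)` given by acting through the domain:
`(b • φ) x = φ (b • x)`. -/

section DomDual

variable (A B X : Type*) [CommRing A] [CommRing B] [AddCommGroup X]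
  [Module A X] [Module B X] [SMulCommClass A B X]

noncomputable instance (priority := 50) Module.domDual : Module B (X →ₗ[A] A) where
  smul b φ :=
    { toFun := fun x => φ (b • x)
      map_add' := fun x y => by show φ (b • (x + y)) = φ (b • x) + φ (b • y); rw [smul_add, map_add]
      map_smul' := fun a x => by
        simp only [RingHom.id_apply]
        show φ (b • a • x) = a • φ (b • x)
        rw [← smul_comm, map_smul] }
  one_smul φ := LinearMap.ext fun x => by
    show φ ((1 : B) • x) = φ x
    rw [one_smul]
  mul_smul b c φ := LinearMap.ext fun x => by
    show φ ((b * c) • x) = φ (c • b • x)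
    rw [mul_comm, mul_smul]
  smul_zero b := LinearMap.ext fun _ => rfl
  smul_add b φ ψ := LinearMap.ext fun _ => rfl
  add_smul b c φ := LinearMap.ext fun x => by
    show φ ((b + c) • x) = φ (b • x) + φ (c • x)
    rw [add_smul, map_add]
  zero_smul φ := LinearMap.ext fun x => by
    show φ ((0 : B) • x) = 0
    rw [zero_smul, map_zero]

@[simp] theorem Module.domDual_smul_apply (b : B) (φ : X →ₗ[A] A) (x : X) :
    (b • φ) x = φ (b • x) := rfl

/-- The domain `B`-action on `Hom_A(X, A)` commutes with the canonical `A`-action. -/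
instance : SMulCommClass A B (X →ₗ[A] A) :=
  ⟨fun _ _ _ => LinearMap.ext fun _ => rfl⟩

instance : SMulCommClass B A (X →ₗ[A] A) :=
  ⟨fun _ _ _ => LinearMap.ext fun _ => rfl⟩

end DomDual


open TensorProduct

section Aux

variable {A B M N : Type*} [CommRing A] [CommRing B]
    [AddCommGroup M] [Module A M] [Module B M]
    [SMulCommClass A B M] [SMulCommClass B A M]
    [AddCommGroup N] [Module B N]

set_option linter.unusedSectionVars false

/-- The additive map `M ⊗[B] N →+ A`, `m ⊗ n ↦ φ (ψ n • m)`. -/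
private noncomputable def innerAdd (φ : M →ₗ[A] A) (ψ : N →ₗ[B] B) :
    M ⊗[B] N →+ A :=
  TensorProduct.liftAddHom
    { toFun := fun m =>
        { toFun := fun n => φ (ψ n • m)
          map_zero' := by simp
          map_add' := fun n n' => by simp [add_smul] }
      map_zero' := by ext n; simp
      map_add' := fun m m' => by ext n; simp [smul_add] }
    (fun b m n => by
      show φ (ψ n • b • m) = φ (ψ (b • n) • m)
      rw [map_smul ψ, smul_eq_mul, smul_smul, mul_comm])

@[simp] private lemma innerAdd_tmul (φ : M →ₗ[A] A) (ψ : N →ₗ[B] B) (m : M) (n : N) :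
    innerAdd φ ψ (m ⊗ₜ[B] n) = φ (ψ n • m) :=
  TensorProduct.liftAddHom_tmul _ _ _ _

/-- `Phi φ ψ : M ⊗[B] N →ₗ[A] A`, `m ⊗ n ↦ φ (ψ n • m)`. -/
private noncomputable def Phi (φ : M →ₗ[A] A) (ψ : N →ₗ[B] B) :
    (M ⊗[B] N) →ₗ[A] A where
  toFun := innerAdd φ ψ
  map_add' := map_add _
  map_smul' := fun a t => by
    simp only [RingHom.id_apply]
    induction t using TensorProduct.induction_on with
    | zero => simp
    | tmul m n =>
      rw [smul_tmul', innerAdd_tmul, innerAdd_tmul, smul_comm (ψ n) a m, map_smul,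
        smul_eq_mul]
    | add x y hx hy => rw [smul_add, map_add, map_add, hx, hy, smul_add]

@[simp] private lemma Phi_tmul (φ : M →ₗ[A] A) (ψ : N →ₗ[B] B) (m : M) (n : N) :
    Phi φ ψ (m ⊗ₜ[B] n) = φ (ψ n • m) :=
  innerAdd_tmul φ ψ m n

private lemma Phi_add_left (φ φ' : M →ₗ[A] A) (ψ : N →ₗ[B] B) :
    Phi (φ + φ') ψ = Phi φ ψ + Phi φ' ψ := by
  refine LinearMap.ext fun t => ?_
  induction t using TensorProduct.induction_on with
  | zero => simp
  | tmul m n => simp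
  | add x y hx hy => simp only [map_add, LinearMap.add_apply] at hx hy ⊢; rw [hx, hy]

private lemma Phi_add_right (φ : M →ₗ[A] A) (ψ ψ' : N →ₗ[B] B) :
    Phi φ (ψ + ψ') = Phi φ ψ + Phi φ ψ' := by
  refine LinearMap.ext fun t => ?_
  induction t using TensorProduct.induction_on with
  | zero => simp
  | tmul m n => simp [add_smul]
  | add x y hx hy => simp only [map_add, LinearMap.add_apply] at hx hy ⊢; rw [hx, hy]

private lemma Phi_zero_left (ψ : N →ₗ[B] B) : Phi (0 : M →ₗ[A] A) ψ = 0 := by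
  refine LinearMap.ext fun t => ?_
  induction t using TensorProduct.induction_on with
  | zero => simp
  | tmul m n => simp
  | add x y hx hy => rw [map_add, hx, hy]; simp

private lemma Phi_zero_right (φ : M →ₗ[A] A) : Phi φ (0 : N →ₗ[B] B) = 0 := by
  refine LinearMap.ext fun t => ?_
  induction t using TensorProduct.induction_on with
  | zero => simp
  | tmul m n => simp
  | add x y hx hy => rw [map_add, hx, hy]; simp

private lemma Phi_balanced (b : B) (φ : M →ₗ[A] A) (ψ : N →ₗ[B] B) :
    Phi (b • φ) ψ = Phi φ (b • ψ) := by
  refine LinearMap.ext fun t => ?_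
  induction t using TensorProduct.induction_on with
  | zero => simp
  | tmul m n =>
    rw [Phi_tmul, Phi_tmul, Module.domDual_smul_apply, LinearMap.smul_apply, smul_smul,
      smul_eq_mul]
  | add x y hx hy => rw [map_add, map_add, hx, hy]

private lemma Phi_smul_left (a : A) (φ : M →ₗ[A] A) (ψ : N →ₗ[B] B) :
    Phi (a • φ) ψ = a • Phi φ ψ := by
  refine LinearMap.ext fun t => ?_
  induction t using TensorProduct.induction_on with
  | zero => simp
  | tmul m n => simp
  | add x y hx hy =>
    rw [map_add, hx, hy, LinearMap.smul_apply, LinearMap.smul_apply, LinearMap.smul_apply,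
      map_add, smul_add]

private noncomputable def outerHom :
    (M →ₗ[A] A) →+ (N →ₗ[B] B) →+ ((M ⊗[B] N) →ₗ[A] A) where
  toFun φ :=
    { toFun := fun ψ => Phi φ ψ
      map_zero' := Phi_zero_right φ
      map_add' := fun ψ ψ' => Phi_add_right φ ψ ψ' }
  map_zero' := by ext ψ : 1; exact Phi_zero_left ψ
  map_add' := fun φ φ' => by ext ψ : 1; exact Phi_add_left φ φ' ψ

private lemma outerHom_apply (φ : M →ₗ[A] A) (ψ : N →ₗ[B] B) :
    outerHom φ ψ = Phi φ ψ := rfl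

private lemma outerHom_balanced (b : B) (φ : M →ₗ[A] A) (ψ : N →ₗ[B] B) :
    outerHom (b • φ) ψ = outerHom φ (b • ψ) := by
  rw [outerHom_apply, outerHom_apply]; exact Phi_balanced b φ ψ

private noncomputable def FmapAdd :
    ((M →ₗ[A] A) ⊗[B] (N →ₗ[B] B)) →+ ((M ⊗[B] N) →ₗ[A] A) :=
  TensorProduct.liftAddHom outerHom outerHom_balanced

private lemma FmapAdd_tmul (φ : M →ₗ[A] A) (ψ : N →ₗ[B] B) :
    FmapAdd (φ ⊗ₜ[B] ψ) = Phi φ ψ := by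
  simp only [FmapAdd, TensorProduct.liftAddHom_tmul, outerHom_apply]

/-- The canonical `A`-linear map
`Hom_A(M, A) ⊗[B] Hom_B(N, B) →ₗ[A] Hom_A(M ⊗[B] N, A)`. -/
private noncomputable def Fmap :
    ((M →ₗ[A] A) ⊗[B] (N →ₗ[B] B)) →ₗ[A] ((M ⊗[B] N) →ₗ[A] A) where
  toFun := FmapAdd
  map_add' := map_add _
  map_smul' := fun a t => by
    simp only [RingHom.id_apply]
    induction t using TensorProduct.induction_on with
    | zero => simp
    | tmul φ ψ =>
      rw [smul_tmul', FmapAdd_tmul, FmapAdd_tmul]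
      exact Phi_smul_left a φ ψ
    | add x y hx hy => rw [smul_add, map_add, map_add, hx, hy, smul_add]

private lemma Fmap_tmul' (φ : M →ₗ[A] A) (ψ : N →ₗ[B] B) :
    Fmap (φ ⊗ₜ[B] ψ) = Phi φ ψ := FmapAdd_tmul φ ψ

@[simp] private lemma Fmap_tmul (φ : M →ₗ[A] A) (ψ : N →ₗ[B] B) (m : M) (n : N) :
    Fmap (φ ⊗ₜ[B] ψ) (m ⊗ₜ[B] n) = φ (ψ n • m) := by
  rw [Fmap_tmul', Phi_tmul]

/-- `m ↦ m ⊗ x₀` as an `A`-linear map. -/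
private noncomputable def iota (x0 : N) : M →ₗ[A] M ⊗[B] N where
  toFun m := m ⊗ₜ[B] x0
  map_add' := fun m m' => add_tmul m m' x0
  map_smul' := fun a m => by simp only [RingHom.id_apply]; exact (smul_tmul' a m x0).symm

end Aux

open TensorProduct in
/-- The duality isomorphism `ν : D_X(M ∘ N) ≅ D_X(M) ∘ D_Y(N)` of Witt-correspondence
composition: for `M` with commuting `A`- and `B`-actions and `N` a finitely generated
projective `B`-module, the canonical `A`-linear map
`Hom_A(M, A) ⊗[B] Hom_B(N, B) → Hom_A(M ⊗[B] N, A)`, `φ ⊗ ψ ↦ (m ⊗ n ↦ φ (ψ n • m))`,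
is bijective.  (Here `Hom_A(M, A)` carries the `B`-action through the domain and
`M ⊗[B] N` the `A`-action through the factor `M`.) -/
theorem stmt_4 (A B M N : Type*) [CommRing A] [CommRing B]
    [AddCommGroup M] [Module A M] [Module B M]
    [SMulCommClass A B M] [SMulCommClass B A M]
    [AddCommGroup N] [Module B N]
    [Module.Finite B N] [Module.Projective B N] :
    ∃ F : ((M →ₗ[A] A) ⊗[B] (N →ₗ[B] B)) →ₗ[A] ((M ⊗[B] N) →ₗ[A] A),
      (∀ (φ : M →ₗ[A] A) (ψ : N →ₗ[B] B) (m : M) (n : N),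
        F (φ ⊗ₜ[B] ψ) (m ⊗ₜ[B] n) = φ (ψ n • m)) ∧
      Function.Bijective ⇑F := by
  classical
  obtain ⟨k, π, hπ⟩ := Module.Finite.exists_fin' B N
  obtain ⟨s, hs⟩ := Module.projective_lifting_property π LinearMap.id hπ
  set x : Fin k → N := fun i => π (Pi.single i 1) with hx
  set f : Fin k → (N →ₗ[B] B) := fun i => (LinearMap.proj i).comp s with hf
  have hdual : ∀ n : N, (∑ i, f i n • x i) = n := by
    intro n
    have h1 : (∑ i, f i n • x i) = π (∑ i, (s n i) • (Pi.single i 1 : Fin k → B)) := by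
      rw [map_sum]
      refine Finset.sum_congr rfl fun i _ => ?_
      rw [map_smul]
      rfl
    rw [h1]
    have h2 : (∑ i, (s n i) • (Pi.single i 1 : Fin k → B)) = s n := by
      refine funext fun j => ?_
      simp [Finset.sum_apply, Pi.single_apply]
    rw [h2]
    exact LinearMap.congr_fun hs n
  refine ⟨Fmap, fun φ ψ m n => Fmap_tmul φ ψ m n, ?_⟩
  rw [Function.bijective_iff_has_inverse]
  refine ⟨fun Φ => ∑ i, (Φ ∘ₗ iota (x i)) ⊗ₜ[B] f i, ?_, ?_⟩
  · -- left inverse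
    intro t
    dsimp only
    induction t using TensorProduct.induction_on with
    | zero =>
      rw [map_zero]
      simp [LinearMap.zero_comp]
    | tmul φ ψ =>
      have key : ∀ i, (Fmap (φ ⊗ₜ[B] ψ)) ∘ₗ iota (x i) = (ψ (x i)) • φ := by
        intro i
        refine LinearMap.ext fun m => ?_
        have : (Fmap (φ ⊗ₜ[B] ψ)) (m ⊗ₜ[B] x i) = φ (ψ (x i) • m) := Fmap_tmul φ ψ m (x i)
        exact this
      calc (∑ i, ((Fmap (φ ⊗ₜ[B] ψ)) ∘ₗ iota (x i)) ⊗ₜ[B] f i)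
          = ∑ i, ((ψ (x i)) • φ) ⊗ₜ[B] f i :=
            Finset.sum_congr rfl fun i _ => by rw [key i]
        _ = ∑ i, φ ⊗ₜ[B] ((ψ (x i)) • f i) :=
            Finset.sum_congr rfl fun i _ => smul_tmul _ _ _
        _ = φ ⊗ₜ[B] (∑ i, (ψ (x i)) • f i) := by rw [tmul_sum]
        _ = φ ⊗ₜ[B] ψ := by
            congr 1
            refine LinearMap.ext fun n => ?_
            simp only [LinearMap.sum_apply, LinearMap.smul_apply, smul_eq_mul]
            calc (∑ i, ψ (x i) * f i n) = ψ (∑ i, f i n • x i) := by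
                  rw [map_sum]
                  exact Finset.sum_congr rfl fun i _ => by
                    rw [map_smul, smul_eq_mul, mul_comm]
              _ = ψ n := by rw [hdual n]
    | add u v hu hv =>
      rw [map_add]
      have hsplit : (∑ i, ((Fmap u + Fmap v) ∘ₗ iota (x i)) ⊗ₜ[B] f i)
          = (∑ i, ((Fmap u) ∘ₗ iota (x i)) ⊗ₜ[B] f i)
            + (∑ i, ((Fmap v) ∘ₗ iota (x i)) ⊗ₜ[B] f i) := by
        rw [← Finset.sum_add_distrib]
        refine Finset.sum_congr rfl fun i _ => ?_
        rw [LinearMap.add_comp, add_tmul]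
      rw [hsplit, hu, hv]
  · -- right inverse
    intro Φ
    dsimp only
    rw [map_sum]
    refine LinearMap.ext fun t => ?_
    induction t using TensorProduct.induction_on with
    | zero => simp
    | tmul m n =>
      simp only [LinearMap.sum_apply]
      have key : ∀ i, (Fmap ((Φ ∘ₗ iota (x i)) ⊗ₜ[B] f i)) (m ⊗ₜ[B] n)
          = Φ (m ⊗ₜ[B] (f i n • x i)) := by
        intro i
        rw [Fmap_tmul]
        show Φ ((f i n • m) ⊗ₜ[B] x i) = _
        rw [smul_tmul]
      rw [Finset.sum_congr rfl fun i _ => key i, ← map_sum, ← tmul_sum, hdual n]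
    | add u v hu hv =>
      rw [map_add, map_add, hu, hv]
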